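/- Let F : ℝ^m → ℝ^m be smooth, p⁻ ≪ p⁺ in ℝ^m, and suppose F(p⁻) = 0 and DF(p⁻)φ⁻ = −λ₋ φ⁻ for some constant λ₋ > 0 and a unit vector φ⁻ ≫ 0. Let K := max{1, sup_{w ∈ [p⁻,p⁺]} |D²F(w)|} and let δ > 0 satisfy δ·K < min_{1≤l≤m} λ₋ φ_l⁻ and δ·φ_l⁻ < p_l⁺ − p_l⁻ for every l. Then for every w ∈ ℝ^m with p⁻ ≼ w ≼ p⁻ + (δ/2)φ⁻ and every ε ∈ [0, δ/2], one has F(w) ≽ F(w + ε φ⁻). -/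

import Mathlib

noncomputable section

/-- Second partial derivative `∂²f_l/∂u_j∂u_k` of `F : ℝ^m → ℝ^m` at `w`. -/
def pd2 {m : ℕ} (F : (Fin m → ℝ) → Fin m → ℝ) (w : Fin m → ℝ) (j k l : Fin m) : ℝ :=
  fderiv ℝ (fun v => fderiv ℝ F v (Pi.single k 1) l) w (Pi.single j 1)

/-- Frobenius (Euclidean) norm of the full second derivative of `F` at `w`. -/
def frobD2 {m : ℕ} (F : (Fin m → ℝ) → Fin m → ℝ) (w : Fin m → ℝ) : ℝ :=
  Real.sqrt (∑ l, ∑ j, ∑ k, (pd2 F w j k l) ^ 2)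

/-- The closed box `[p⁻, p⁺]` in `ℝ^m`. -/
def closedBox {m : ℕ} (pm pp : Fin m → ℝ) : Set (Fin m → ℝ) :=
  {w | ∀ i, pm i ≤ w i ∧ w i ≤ pp i}

/-- Expansion of a continuous linear map on `ℝ^m` over the standard basis. -/
lemma clm_pi_expand {m : ℕ} {E : Type*} [NormedAddCommGroup E] [NormedSpace ℝ E]
    (L : (Fin m → ℝ) →L[ℝ] E) (x : Fin m → ℝ) :
    L x = ∑ k, x k • L (Pi.single k 1) := by
  have hs : ∀ k : Fin m, (fun j => if k = j then (1:ℝ) else 0) = Pi.single k 1 := by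
    intro k; funext j; simp [Pi.single_apply, eq_comm]
  conv_lhs => rw [pi_eq_sum_univ x]
  rw [map_sum]
  simp only [map_smul, hs]

/-- Each first-partial-derivative entry of a smooth map is smooth. -/
lemma contDiff_D1 {m : ℕ} {F : (Fin m → ℝ) → Fin m → ℝ} (hF : ContDiff ℝ (⊤ : ℕ∞) F)
    (k l : Fin m) :
    ContDiff ℝ (⊤ : ℕ∞) (fun v => fderiv ℝ F v (Pi.single k 1) l) := by
  have h1 : ContDiff ℝ (⊤ : ℕ∞) (fderiv ℝ F) :=
    hF.fderiv_right (by exact_mod_cast le_top)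
  have h2 : ContDiff ℝ (⊤ : ℕ∞) (fun v => fderiv ℝ F v (Pi.single k 1)) :=
    h1.clm_apply contDiff_const
  exact (ContinuousLinearMap.proj l : (Fin m → ℝ) →L[ℝ] ℝ).contDiff.comp h2

lemma continuous_frobD2 {m : ℕ} {F : (Fin m → ℝ) → Fin m → ℝ}
    (hF : ContDiff ℝ (⊤ : ℕ∞) F) : Continuous (frobD2 F) := by
  have h : ∀ j k l : Fin m, Continuous fun w => pd2 F w j k l := by
    intro j k l
    have h1 : ContDiff ℝ (⊤ : ℕ∞)
        (fderiv ℝ (fun v => fderiv ℝ F v (Pi.single k 1) l)) :=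
      (contDiff_D1 hF k l).fderiv_right (by exact_mod_cast le_top)
    exact (h1.clm_apply contDiff_const).continuous
  unfold frobD2
  exact Real.continuous_sqrt.comp
    (continuous_finset_sum _ fun l _ => continuous_finset_sum _ fun j _ =>
      continuous_finset_sum _ fun k _ => (h j k l).pow 2)

lemma frobD2_le_K {m : ℕ} {F : (Fin m → ℝ) → Fin m → ℝ} (hF : ContDiff ℝ (⊤ : ℕ∞) F)
    (pm pp : Fin m → ℝ) {u : Fin m → ℝ} (hu : u ∈ closedBox pm pp) :
    frobD2 F u ≤ max 1 (sSup {r : ℝ | ∃ w ∈ closedBox pm pp, r = frobD2 F w}) := by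
  have hbox_eq : closedBox pm pp = Set.Icc pm pp := by
    ext v; simp [closedBox, Set.mem_Icc, Pi.le_def, forall_and]
  have hmemS : frobD2 F u ∈ {r : ℝ | ∃ w ∈ closedBox pm pp, r = frobD2 F w} :=
    ⟨u, hu, rfl⟩
  have hbdd : BddAbove {r : ℝ | ∃ w ∈ closedBox pm pp, r = frobD2 F w} := by
    have himg : {r : ℝ | ∃ w ∈ closedBox pm pp, r = frobD2 F w}
        = frobD2 F '' (closedBox pm pp) := by
      ext r; simp [Set.mem_image, eq_comm]
    rw [himg, hbox_eq]
    exact (isCompact_Icc.image (continuous_frobD2 hF)).bddAbove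
  exact le_trans (le_csSup hbdd hmemS) (le_max_right _ _)

/-- Near the stable equilibrium `p⁻`, shifting up along the positive eigenvector `φ⁻`
decreases `F` componentwise. -/
theorem F_ge_F_add_smul_eigvec_near_pminus
    {m : ℕ} (hm : 1 ≤ m)
    (F : (Fin m → ℝ) → Fin m → ℝ) (hF : ContDiff ℝ (⊤ : ℕ∞) F)
    (pm pp : Fin m → ℝ) (hbox : ∀ l, pm l < pp l)
    (hFpm : F pm = 0)
    (lamm : ℝ) (hlamm : 0 < lamm)
    (phim : Fin m → ℝ) (hphim : ∀ l, 0 < phim l)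
    (hunit : Real.sqrt (∑ l, phim l ^ 2) = 1)
    (heig : fderiv ℝ F pm phim = (-lamm) • phim)
    (K : ℝ)
    (hK : K = max 1 (sSup {r : ℝ | ∃ w ∈ closedBox pm pp, r = frobD2 F w}))
    (δ : ℝ) (hδ : 0 < δ)
    (hδ1 : ∀ l, δ * K < lamm * phim l)
    (hδ2 : ∀ l, δ * phim l < pp l - pm l) :
    ∀ w : Fin m → ℝ, (∀ l, pm l ≤ w l ∧ w l ≤ pm l + (δ / 2) * phim l) →
      ∀ ε : ℝ, 0 ≤ ε → ε ≤ δ / 2 → ∀ l, F w l ≥ F (w + ε • phim) l := by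
  intro w hw ε hε0 hεδ l
  have hKb : ∀ u ∈ closedBox pm pp, frobD2 F u ≤ K := by
    rw [hK]; intro u hu; exact frobD2_le_K hF pm pp hu
  have hK1 : (1:ℝ) ≤ K := by rw [hK]; exact le_max_left _ _
  have hK0 : (0:ℝ) ≤ K := le_trans zero_le_one hK1
  have hsum_phi : ∑ k, phim k ^ 2 = 1 := Real.sqrt_eq_one.mp hunit
  have hFdiff : Differentiable ℝ F := hF.differentiable (by simp)
  -- Key gradient bound: on the region `pm ≤ u ≤ pm + δ • φ`, the directional
  -- derivative of `F_l` along `φ` is nonpositive.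
  have hgrad : ∀ u : Fin m → ℝ, (∀ j, pm j ≤ u j ∧ u j ≤ pm j + δ * phim j) →
      fderiv ℝ F u phim l ≤ 0 := by
    intro u hu
    have hd0 : ∀ j, 0 ≤ (u - pm) j := fun j => by
      have := (hu j).1; simp only [Pi.sub_apply]; linarith
    have hdδ : ∀ j, (u - pm) j ≤ δ * phim j := fun j => by
      have := (hu j).2; simp only [Pi.sub_apply]; linarith
    have hptbox : ∀ t ∈ Set.Icc (0:ℝ) 1, (pm + t • (u - pm)) ∈ closedBox pm pp := by
      intro t ht j
      have h1 : 0 ≤ t * (u - pm) j := mul_nonneg ht.1 (hd0 j)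
      have h2 : t * (u - pm) j ≤ δ * phim j :=
        le_trans (mul_le_of_le_one_left (hd0 j) ht.2) (hdδ j)
      have h3 := hδ2 j
      constructor
      · simp only [Pi.add_apply, Pi.smul_apply, smul_eq_mul]; linarith
      · simp only [Pi.add_apply, Pi.smul_apply, smul_eq_mul]; linarith
    set G : ℝ → ℝ := fun t => fderiv ℝ F (pm + t • (u - pm)) phim l with hGdef
    set G' : ℝ → ℝ := fun t => ∑ k, phim k *
      ∑ j, (u - pm) j * pd2 F (pm + t • (u - pm)) j k l with hG'def
    have hG : ∀ t : ℝ, HasDerivAt G (G' t) t := by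
      intro t
      have hline : HasDerivAt (fun s : ℝ => pm + s • (u - pm)) (u - pm) t := by
        simpa using ((hasDerivAt_id t).smul_const (u - pm)).const_add pm
      have hterm : ∀ k : Fin m, HasDerivAt
          (fun s : ℝ => fderiv ℝ F (pm + s • (u - pm)) (Pi.single k 1) l)
          (∑ j, (u - pm) j * pd2 F (pm + t • (u - pm)) j k l) t := by
        intro k
        have hD1 : DifferentiableAt ℝ (fun v => fderiv ℝ F v (Pi.single k 1) l)
            (pm + t • (u - pm)) :=
          ((contDiff_D1 hF k l).differentiable (by simp)) _
        have hcomp := hD1.hasFDerivAt.comp_hasDerivAt t hline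
        have hexp := clm_pi_expand
          (fderiv ℝ (fun v => fderiv ℝ F v (Pi.single k 1) l) (pm + t • (u - pm))) (u - pm)
        rw [hexp] at hcomp
        simpa [pd2, smul_eq_mul, Function.comp_def] using hcomp
      have hGe : G = fun s : ℝ => ∑ k, phim k *
          (fderiv ℝ F (pm + s • (u - pm)) (Pi.single k 1) l) := by
        funext s
        have := clm_pi_expand (fderiv ℝ F (pm + s • (u - pm))) phim
        simp only [hGdef]
        rw [this]
        simp [Finset.sum_apply]
      rw [hGe, hG'def]
      exact HasDerivAt.fun_sum fun k _ => (hterm k).const_mul (phim k)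
    have hG'bound : ∀ t ∈ Set.Icc (0:ℝ) 1, ‖G' t‖ ≤ δ * K := by
      intro t ht
      set pt := pm + t • (u - pm) with hpt
      have hfrob : frobD2 F pt ≤ K := hKb _ (hptbox t ht)
      have hsq : (G' t) ^ 2 ≤ (δ * K) ^ 2 := by
        have hprod : G' t = ∑ p ∈ Finset.univ ×ˢ Finset.univ,
            (phim p.1 * (u - pm) p.2) * pd2 F pt p.2 p.1 l := by
          rw [Finset.sum_product]
          simp only [hG'def, Finset.mul_sum]
          exact Finset.sum_congr rfl fun k _ => Finset.sum_congr rfl fun j _ => by ring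
        have hcs := Finset.sum_mul_sq_le_sq_mul_sq (Finset.univ ×ˢ Finset.univ)
          (fun p : Fin m × Fin m => phim p.1 * (u - pm) p.2)
          (fun p : Fin m × Fin m => pd2 F pt p.2 p.1 l)
        have hA : ∑ p ∈ Finset.univ ×ˢ Finset.univ,
            (phim p.1 * (u - pm) p.2) ^ 2 ≤ δ ^ 2 := by
          rw [Finset.sum_product]
          have : ∀ k : Fin m, ∑ j, (phim k * (u - pm) j) ^ 2
              ≤ phim k ^ 2 * (δ ^ 2) := by
            intro k
            have hj : ∑ j, ((u - pm) j) ^ 2 ≤ δ ^ 2 := by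
              calc ∑ j, ((u - pm) j) ^ 2 ≤ ∑ j, (δ * phim j) ^ 2 :=
                    Finset.sum_le_sum fun j _ => pow_le_pow_left₀ (hd0 j) (hdδ j) 2
                _ = δ ^ 2 * ∑ j, phim j ^ 2 := by
                    rw [Finset.mul_sum]; exact Finset.sum_congr rfl fun j _ => by ring
                _ = δ ^ 2 := by rw [hsum_phi, mul_one]
            calc ∑ j, (phim k * (u - pm) j) ^ 2
                = phim k ^ 2 * ∑ j, ((u - pm) j) ^ 2 := by
                  rw [Finset.mul_sum]; exact Finset.sum_congr rfl fun j _ => by ring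
              _ ≤ phim k ^ 2 * δ ^ 2 :=
                  mul_le_mul_of_nonneg_left hj (sq_nonneg _)
          calc ∑ k, ∑ j, (phim k * (u - pm) j) ^ 2
              ≤ ∑ k, phim k ^ 2 * δ ^ 2 := Finset.sum_le_sum fun k _ => this k
            _ = (∑ k, phim k ^ 2) * δ ^ 2 := by rw [Finset.sum_mul]
            _ = δ ^ 2 := by rw [hsum_phi, one_mul]
        have hB : ∑ p ∈ Finset.univ ×ˢ Finset.univ,
            (pd2 F pt p.2 p.1 l) ^ 2 ≤ K ^ 2 := by
          have h1 : ∑ p ∈ Finset.univ ×ˢ Finset.univ, (pd2 F pt p.2 p.1 l) ^ 2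
              = ∑ j, ∑ k, (pd2 F pt j k l) ^ 2 := by
            rw [Finset.sum_product]
            exact Finset.sum_comm
          have h2 : ∑ j, ∑ k, (pd2 F pt j k l) ^ 2
              ≤ ∑ l', ∑ j, ∑ k, (pd2 F pt j k l') ^ 2 :=
            Finset.single_le_sum (f := fun l' => ∑ j, ∑ k, (pd2 F pt j k l') ^ 2)
              (fun l' _ => Finset.sum_nonneg fun j _ =>
                Finset.sum_nonneg fun k _ => sq_nonneg _) (Finset.mem_univ l)
          have h3 : ∑ l', ∑ j, ∑ k, (pd2 F pt j k l') ^ 2 = (frobD2 F pt) ^ 2 := by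
            rw [frobD2, Real.sq_sqrt]
            exact Finset.sum_nonneg fun l' _ => Finset.sum_nonneg fun j _ =>
              Finset.sum_nonneg fun k _ => sq_nonneg _
          have h4 : (frobD2 F pt) ^ 2 ≤ K ^ 2 :=
            pow_le_pow_left₀ (Real.sqrt_nonneg _) hfrob 2
          rw [h1]; rw [h3] at h2; exact le_trans h2 h4
        calc (G' t) ^ 2 ≤ δ ^ 2 * K ^ 2 := by
              rw [hprod]
              exact le_trans hcs (mul_le_mul hA hB
                (Finset.sum_nonneg fun p _ => sq_nonneg _) (sq_nonneg _))
          _ = (δ * K) ^ 2 := by ring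
      have := Real.sqrt_le_sqrt hsq
      rwa [Real.sqrt_sq_eq_abs, Real.sqrt_sq (by positivity)] at this
    have hmvt : ‖G 1 - G 0‖ ≤ δ * K * ‖(1:ℝ) - 0‖ :=
      (convex_Icc (0:ℝ) 1).norm_image_sub_le_of_norm_hasDerivWithin_le
        (fun t _ => (hG t).hasDerivWithinAt) hG'bound
        (Set.mem_Icc.mpr ⟨le_refl 0, zero_le_one⟩)
        (Set.mem_Icc.mpr ⟨zero_le_one, le_refl 1⟩)
    have hG1 : G 1 = fderiv ℝ F u phim l := by simp [hGdef]
    have hG0 : G 0 = -lamm * phim l := by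
      simp only [hGdef, zero_smul, add_zero, heig]
      simp
    rw [hG1, hG0] at hmvt
    have habs : |fderiv ℝ F u phim l - (-lamm * phim l)| ≤ δ * K := by
      simpa [Real.norm_eq_abs] using hmvt
    have := (abs_le.mp habs).2
    have hδ1l := hδ1 l
    linarith
  -- Monotonicity along the line `t ↦ w + t • φ`.
  set g : ℝ → ℝ := fun t => F (w + t • phim) l with hgdef
  have hgd : ∀ t : ℝ, HasDerivAt g (fderiv ℝ F (w + t • phim) phim l) t := by
    intro t
    have hline : HasDerivAt (fun s : ℝ => w + s • phim) phim t := by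
      simpa using ((hasDerivAt_id t).smul_const phim).const_add w
    have h1 := (hFdiff (w + t • phim)).hasFDerivAt.comp_hasDerivAt t hline
    have h2 := (ContinuousLinearMap.proj (R := ℝ) (φ := fun _ : Fin m => ℝ)
      l).hasFDerivAt.comp_hasDerivAt t h1
    simpa [hgdef, Function.comp_def] using h2
  have hanti : AntitoneOn g (Set.Icc 0 (δ / 2)) := by
    apply antitoneOn_of_deriv_nonpos (convex_Icc _ _)
    · exact fun t _ => (hgd t).continuousAt.continuousWithinAt
    · exact fun t _ => (hgd t).differentiableAt.differentiableWithinAt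
    · intro t ht
      rw [interior_Icc] at ht
      rw [(hgd t).deriv]
      apply hgrad
      intro j
      have h1 := (hw j).1
      have h2 := (hw j).2
      have hphi := (hphim j).le
      have ht0 : 0 ≤ t * phim j := mul_nonneg ht.1.le hphi
      have ht2 : t * phim j ≤ (δ / 2) * phim j :=
        mul_le_mul_of_nonneg_right ht.2.le hphi
      constructor
      · simp only [Pi.add_apply, Pi.smul_apply, smul_eq_mul]; linarith
      · simp only [Pi.add_apply, Pi.smul_apply, smul_eq_mul]; linarith
  have h0mem : (0:ℝ) ∈ Set.Icc (0:ℝ) (δ / 2) := ⟨le_refl 0, by linarith⟩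
  have hεmem : ε ∈ Set.Icc (0:ℝ) (δ / 2) := ⟨hε0, hεδ⟩
  have := hanti h0mem hεmem hε0
  simpa [hgdef] using this
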